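/- arXiv:math/0202235 — 2 statements merged into one kernel-verified Lean document; each statement's English description precedes it below -/
import Mathlib

section
/- Under the hypotheses of the previous variation-of-parameters formula (R analytic with |R(t)| ≤ K|t|^{-3-2Re ν} on the sector, Re ν > 0), the solution Δ(t) = (2ν+1)^{-1}[t ∫_∞^t R ds − t^{-2ν} ∫_∞^t s^{1+2ν} R ds] satisfies |Δ(t)| ≤ K' |t|^{-1-2Re ν} and |Δ'(t)| ≤ K' |t|^{-2-2Re ν} for a constant K' depending only on K, ν and the sector. -/
open Complex MeasureTheory Set Metric Filter Topology

private lemma rpmul {x : ℝ} (hx : 0 < x) {a b c : ℝ} (h : a + b = c) :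
    x ^ a * x ^ b = x ^ c := by rw [← Real.rpow_add hx, h]

private lemma vp_intOn {p : ℝ} (hp : p < -1) :
    IntegrableOn (fun σ : ℝ => σ ^ p) (Set.Ici 1) := by
  rw [integrableOn_Ici_iff_integrableOn_Ioi]
  exact integrableOn_Ioi_rpow_of_lt hp one_pos

private lemma vp_Jnonneg (p : ℝ) : 0 ≤ ∫ σ in Set.Ici (1:ℝ), σ ^ p := by
  apply setIntegral_nonneg measurableSet_Ici
  intro σ hσ
  exact Real.rpow_nonneg (le_trans zero_le_one hσ) p

private lemma vp_cpow_bound {z w : ℂ} (hz : z ≠ 0) {C : ℝ} (hC : |w.im| ≤ C) :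
    ‖z ^ w‖ ≤ ‖z‖ ^ w.re * Real.exp (C * Real.pi) := by
  rw [Complex.norm_cpow_of_ne_zero hz, div_eq_mul_inv, ← Real.exp_neg]
  apply mul_le_mul_of_nonneg_left _ (Real.rpow_nonneg (norm_nonneg z) _)
  apply Real.exp_le_exp.2
  calc -(z.arg * w.im) ≤ |z.arg * w.im| := neg_le_abs _
    _ = |z.arg| * |w.im| := abs_mul _ _
    _ ≤ Real.pi * C := by
        apply mul_le_mul (Complex.abs_arg_le_pi z) hC (abs_nonneg _)
        exact Real.pi_nonneg
    _ = C * Real.pi := mul_comm _ _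

private lemma vp_norm_setIntegral {f : ℝ → ℂ} {D p : ℝ} (hp : p < -1)
    (hbound : ∀ σ : ℝ, 1 ≤ σ → ‖f σ‖ ≤ D * σ ^ p) :
    ‖∫ σ in Set.Ici (1:ℝ), f σ‖ ≤ D * ∫ σ in Set.Ici (1:ℝ), σ ^ p := by
  have h1 : ‖∫ σ in Set.Ici (1:ℝ), f σ‖ ≤ ∫ σ in Set.Ici (1:ℝ), D * σ ^ p := by
    apply norm_integral_le_of_norm_le ((vp_intOn hp).const_mul D)
    filter_upwards [ae_restrict_mem measurableSet_Ici] with σ hσ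
    exact hbound σ hσ
  rwa [MeasureTheory.integral_const_mul] at h1

set_option maxHeartbeats 3200000 in
/-- Under the hypotheses of the variation-of-parameters formula
(`R` analytic with `|R(t)| ≤ K |t|^{-3-2Re ν}` on the sector, `Re ν > 0`),
the solution `Δ(t) = (2ν+1)⁻¹ [t ∫_∞^t R ds − t^{-2ν} ∫_∞^t s^{1+2ν} R ds]`
satisfies `|Δ(t)| ≤ K' |t|^{-1-2Re ν}` and `|Δ'(t)| ≤ K' |t|^{-2-2Re ν}`. -/
theorem variation_of_parameters_bounds (ρ A B : ℝ) (ν : ℂ) (hν : 0 < ν.re)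
    (hν1 : 2 * ν + 1 ≠ 0) (K : ℝ)
    (S : Set ℂ) (hS : S = {t : ℂ | ρ < ‖t‖ ∧ A < t.arg ∧ t.arg < B})
    (hslit : S ⊆ Complex.slitPlane)
    (hray : ∀ t ∈ S, ∀ σ : ℝ, 1 ≤ σ → (σ : ℂ) * t ∈ S)
    (R : ℂ → ℂ) (hRa : DifferentiableOn ℂ R S)
    (hRb : ∀ t ∈ S, ‖R t‖ ≤ K * ‖t‖ ^ (-3 - 2 * ν.re))
    (Δ : ℂ → ℂ)
    (hΔ : ∀ t ∈ S, Δ t = (2 * ν + 1)⁻¹ *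
      (t * (-(∫ σ in Set.Ici (1 : ℝ), R ((σ : ℂ) * t) * t))
        - t ^ (-2 * ν) *
          (-(∫ σ in Set.Ici (1 : ℝ), ((σ : ℂ) * t) ^ (1 + 2 * ν) * R ((σ : ℂ) * t) * t)))) :
    ∃ K' : ℝ, 0 < K' ∧ ∀ t ∈ S,
      ‖Δ t‖ ≤ K' * ‖t‖ ^ (-1 - 2 * ν.re) ∧
      ‖deriv Δ t‖ ≤ K' * ‖t‖ ^ (-2 - 2 * ν.re) := by
  set α := ν.re with hαdef
  set c : ℂ := (2 * ν + 1)⁻¹ with hcdef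
  set Cν : ℝ := Real.exp ((2 * |ν.im| + 1) * Real.pi) with hCνdef
  have hCν0 : 0 < Cν := Real.exp_pos _
  set K₀ : ℝ := max K 0 with hK₀def
  have hK₀0 : 0 ≤ K₀ := le_max_right _ _
  set J1 : ℝ := ∫ σ in Set.Ici (1:ℝ), σ ^ (-3 - 2 * α) with hJ1def
  set J2 : ℝ := ∫ σ in Set.Ici (1:ℝ), σ ^ (-2 : ℝ) with hJ2def
  have hJ1 : 0 ≤ J1 := vp_Jnonneg _
  have hJ2 : 0 ≤ J2 := vp_Jnonneg _
  have hp1 : (-3 - 2*α : ℝ) < -1 := by linarith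
  have htne : ∀ t ∈ S, t ≠ 0 := fun t ht => Complex.slitPlane_ne_zero (hslit ht)
  have htpos : ∀ t ∈ S, 0 < ‖t‖ := fun t ht => norm_pos_iff.mpr (htne t ht)
  have hRb' : ∀ t ∈ S, ‖R t‖ ≤ K₀ * ‖t‖ ^ (-3 - 2 * α) := by
    intro t ht
    exact (hRb t ht).trans (mul_le_mul_of_nonneg_right (le_max_left _ _)
      (Real.rpow_nonneg (norm_nonneg t) _))
  have hSopen : IsOpen S := by
    rw [isOpen_iff_mem_nhds]
    intro t ht
    have harg : ContinuousAt Complex.arg t := Complex.continuousAt_arg (hslit ht)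
    have habs : ContinuousAt (fun z : ℂ => ‖z‖) t := continuous_norm.continuousAt
    rw [hS] at ht ⊢
    filter_upwards [habs.eventually (eventually_gt_nhds ht.1),
      harg.eventually (eventually_gt_nhds ht.2.1),
      harg.eventually (eventually_lt_nhds ht.2.2)] with s h1 h2 h3
    exact ⟨h1, h2, h3⟩
  have habsmul : ∀ (t : ℂ) (σ : ℝ), 0 ≤ σ →
      ‖(σ:ℂ) * t‖ = σ * ‖t‖ := by
    intro t σ hσ
    rw [norm_mul, Complex.norm_real, Real.norm_eq_abs, _root_.abs_of_nonneg hσ]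
  -- bound on first integrand
  have hb1 : ∀ t ∈ S, ∀ σ : ℝ, 1 ≤ σ →
      ‖R ((σ:ℂ) * t) * t‖ ≤
        (K₀ * ‖t‖ ^ (-2 - 2*α)) * σ ^ (-3 - 2*α) := by
    intro t ht σ hσ
    have hσ0 : (0:ℝ) ≤ σ := le_trans zero_le_one hσ
    have htp := htpos t ht
    have hmem := hray t ht σ hσ
    calc ‖R ((σ:ℂ) * t) * t‖
        = ‖R ((σ:ℂ) * t)‖ * ‖t‖ := norm_mul _ _
      _ ≤ (K₀ * ‖(σ:ℂ) * t‖ ^ (-3 - 2*α)) * ‖t‖ := by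
          exact mul_le_mul_of_nonneg_right (hRb' _ hmem) (norm_nonneg t)
      _ = (K₀ * ‖t‖ ^ (-2 - 2*α)) * σ ^ (-3 - 2*α) := by
          rw [habsmul t σ hσ0, Real.mul_rpow hσ0 (norm_nonneg t)]
          rw [show K₀ * (σ ^ (-3 - 2*α) * ‖t‖ ^ (-3 - 2*α)) * ‖t‖
              = K₀ * (‖t‖ ^ (-3 - 2*α) * ‖t‖ ^ (1:ℝ)) * σ ^ (-3 - 2*α) by
            rw [Real.rpow_one]; ring]
          rw [rpmul htp (show (-3 - 2*α) + 1 = -2 - 2*α by ring)]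
  -- bound on second integrand
  have hb2 : ∀ t ∈ S, ∀ σ : ℝ, 1 ≤ σ →
      ‖((σ:ℂ) * t) ^ (1 + 2*ν) * R ((σ:ℂ) * t) * t‖ ≤
        (Cν * K₀ * ‖t‖ ^ (-1 : ℝ)) * σ ^ (-2 : ℝ) := by
    intro t ht σ hσ
    have hσ0 : (0:ℝ) ≤ σ := le_trans zero_le_one hσ
    have htp := htpos t ht
    have hmem := hray t ht σ hσ
    have hmne : (σ:ℂ) * t ≠ 0 := htne _ hmem
    have hmp : 0 < ‖(σ:ℂ) * t‖ := norm_pos_iff.mpr hmne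
    have him : |(1 + 2*ν).im| ≤ 2 * |ν.im| + 1 := by
      have h : (1 + 2*ν).im = 2 * ν.im := by simp
      rw [h, abs_mul]; rw [show |(2:ℝ)| = 2 by norm_num]
      linarith [abs_nonneg ν.im]
    have hcp := vp_cpow_bound hmne him
    have hre : (1 + 2*ν).re = 1 + 2*α := by simp [Complex.add_re, Complex.mul_re, hαdef]
    rw [hre] at hcp
    calc ‖((σ:ℂ) * t) ^ (1 + 2*ν) * R ((σ:ℂ) * t) * t‖
        = ‖((σ:ℂ) * t) ^ (1 + 2*ν)‖ * ‖R ((σ:ℂ) * t)‖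
            * ‖t‖ := by rw [norm_mul, norm_mul]
      _ ≤ (‖(σ:ℂ)*t‖ ^ (1 + 2*α) * Cν) * (K₀ * ‖(σ:ℂ)*t‖ ^ (-3 - 2*α))
            * ‖t‖ := by
          apply mul_le_mul_of_nonneg_right _ (norm_nonneg t)
          apply mul_le_mul hcp (hRb' _ hmem) (norm_nonneg _)
          positivity
      _ = (Cν * K₀) * (‖(σ:ℂ)*t‖ ^ (1 + 2*α) * ‖(σ:ℂ)*t‖ ^ (-3 - 2*α))
            * ‖t‖ := by ring
      _ = (Cν * K₀ * ‖t‖ ^ (-1 : ℝ)) * σ ^ (-2 : ℝ) := by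
          rw [rpmul hmp (show (1 + 2*α) + (-3 - 2*α) = (-2:ℝ) by ring)]
          rw [habsmul t σ hσ0, Real.mul_rpow hσ0 (norm_nonneg t)]
          rw [show (Cν * K₀) * (σ ^ (-2:ℝ) * ‖t‖ ^ (-2:ℝ)) * ‖t‖
              = (Cν * K₀) * (‖t‖ ^ (-2:ℝ) * ‖t‖ ^ (1:ℝ)) * σ ^ (-2:ℝ) by
            rw [Real.rpow_one]; ring]
          rw [rpmul htp (show (-2:ℝ) + 1 = -1 by ring)]
  -- continuity and measurability
  have hp2 : (-2:ℝ) < -1 := by norm_num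
  have hlinC : ∀ t : ℂ, ContinuousOn (fun σ:ℝ => (σ:ℂ) * t) (Ici 1) :=
    fun t => (Complex.continuous_ofReal.mul continuous_const).continuousOn
  have hmapS : ∀ t ∈ S, Set.MapsTo (fun σ:ℝ => (σ:ℂ) * t) (Ici 1) S :=
    fun t ht σ hσ => hray t ht σ hσ
  have hRcont : ContinuousOn R S := hRa.continuousOn
  have hAn : AnalyticOnNhd ℂ R S := hRa.analyticOnNhd hSopen
  have hR'cont : ContinuousOn (deriv R) S := hAn.deriv.continuousOn
  have hcpowcont : ContinuousOn (fun z : ℂ => z ^ (1 + 2*ν)) S := fun z hz =>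
    (continuousAt_cpow_const (hslit hz)).continuousWithinAt
  have hmeas1 : ∀ t ∈ S, AEStronglyMeasurable (fun σ:ℝ => R ((σ:ℂ)*t) * t)
      (volume.restrict (Ici 1)) := by
    intro t ht
    exact ((hRcont.comp (hlinC t) (hmapS t ht)).mul
      continuousOn_const).aestronglyMeasurable measurableSet_Ici
  have hmeas2 : ∀ t ∈ S, AEStronglyMeasurable
      (fun σ:ℝ => ((σ:ℂ)*t) ^ (1+2*ν) * R ((σ:ℂ)*t) * t) (volume.restrict (Ici 1)) := by
    intro t ht
    exact (((hcpowcont.comp (hlinC t) (hmapS t ht)).mul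
      (hRcont.comp (hlinC t) (hmapS t ht))).mul
      continuousOn_const).aestronglyMeasurable measurableSet_Ici
  have hint1 : ∀ t ∈ S, Integrable (fun σ:ℝ => R ((σ:ℂ)*t) * t)
      (volume.restrict (Ici 1)) := by
    intro t ht
    apply Integrable.mono'
      ((vp_intOn hp1).const_mul (K₀ * ‖t‖ ^ (-2-2*α))) (hmeas1 t ht)
    filter_upwards [ae_restrict_mem measurableSet_Ici] with σ hσ
    exact hb1 t ht σ hσ
  have hint2 : ∀ t ∈ S, Integrable (fun σ:ℝ => ((σ:ℂ)*t) ^ (1+2*ν) * R ((σ:ℂ)*t) * t)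
      (volume.restrict (Ici 1)) := by
    intro t ht
    apply Integrable.mono'
      ((vp_intOn hp2).const_mul (Cν * K₀ * ‖t‖ ^ (-1:ℝ))) (hmeas2 t ht)
    filter_upwards [ae_restrict_mem measurableSet_Ici] with σ hσ
    exact hb2 t ht σ hσ
  -- bounds on the two integrals
  have hg1bound : ∀ t ∈ S, ‖∫ σ in Set.Ici (1:ℝ), R ((σ:ℂ)*t) * t‖ ≤
      (K₀ * ‖t‖ ^ (-2-2*α)) * J1 :=
    fun t ht => vp_norm_setIntegral hp1 (hb1 t ht)
  have hg2bound : ∀ t ∈ S, ‖∫ σ in Set.Ici (1:ℝ),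
      ((σ:ℂ)*t) ^ (1+2*ν) * R ((σ:ℂ)*t) * t‖ ≤
      (Cν * K₀ * ‖t‖ ^ (-1:ℝ)) * J2 :=
    fun t ht => vp_norm_setIntegral hp2 (hb2 t ht)
  -- bound for t ^ (-2ν) and t ^ (-2ν - 1)
  have hcpneg : ∀ t ∈ S, ‖t ^ (-2*ν)‖ ≤ ‖t‖ ^ (-(2*α)) * Cν := by
    intro t ht
    have him : |(-2*ν).im| ≤ 2*|ν.im|+1 := by
      have h : (-2*ν).im = -(2 * ν.im) := by simp
      rw [h, abs_neg, abs_mul]; rw [show |(2:ℝ)| = 2 by norm_num]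
      linarith [abs_nonneg ν.im]
    have h := vp_cpow_bound (htne t ht) him
    have hre : (-2*ν).re = -(2*α) := by simp [hαdef]
    rwa [hre] at h
  -- the Δ bound
  have hΔbound : ∀ t ∈ S, ‖Δ t‖ ≤
      (‖c‖ * (K₀*J1 + Cν*Cν*K₀*J2)) * ‖t‖ ^ (-1-2*α) := by
    intro t ht
    have htp := htpos t ht
    rw [hΔ t ht]
    have e1 : ‖t‖ * ((K₀ * ‖t‖ ^ (-2-2*α)) * J1)
        = (K₀*J1) * ‖t‖ ^ (-1-2*α) := by
      rw [show ‖t‖ * ((K₀ * ‖t‖ ^ (-2-2*α)) * J1)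
          = (K₀*J1) * (‖t‖ ^ (1:ℝ) * ‖t‖ ^ (-2-2*α)) by
        rw [Real.rpow_one]; ring]
      rw [rpmul htp (show (1:ℝ) + (-2-2*α) = -1-2*α by ring)]
    have e2 : (‖t‖ ^ (-(2*α)) * Cν) * ((Cν * K₀ * ‖t‖ ^ (-1:ℝ)) * J2)
        = (Cν*Cν*K₀*J2) * ‖t‖ ^ (-1-2*α) := by
      rw [show (‖t‖ ^ (-(2*α)) * Cν) * ((Cν * K₀ * ‖t‖ ^ (-1:ℝ)) * J2)
          = (Cν*Cν*K₀*J2) * (‖t‖ ^ (-(2*α)) * ‖t‖ ^ (-1:ℝ)) by ring]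
      rw [rpmul htp (show -(2*α) + (-1:ℝ) = -1-2*α by ring)]
    calc ‖c * ((t * (-(∫ σ in Set.Ici (1:ℝ), R ((σ:ℂ)*t) * t)))
            - t ^ (-2*ν) * (-(∫ σ in Set.Ici (1:ℝ), ((σ:ℂ)*t) ^ (1+2*ν) * R ((σ:ℂ)*t) * t)))‖
        = ‖c‖ * ‖(t * (-(∫ σ in Set.Ici (1:ℝ), R ((σ:ℂ)*t) * t)))
            - t ^ (-2*ν) * (-(∫ σ in Set.Ici (1:ℝ), ((σ:ℂ)*t) ^ (1+2*ν) * R ((σ:ℂ)*t) * t))‖ :=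
          norm_mul _ _
      _ ≤ ‖c‖ * (‖t * (-(∫ σ in Set.Ici (1:ℝ), R ((σ:ℂ)*t) * t))‖
            + ‖t ^ (-2*ν) * (-(∫ σ in Set.Ici (1:ℝ),
                ((σ:ℂ)*t) ^ (1+2*ν) * R ((σ:ℂ)*t) * t))‖) :=
          mul_le_mul_of_nonneg_left (norm_sub_le _ _) (norm_nonneg c)
      _ ≤ ‖c‖ * (‖t‖ * ((K₀ * ‖t‖ ^ (-2-2*α)) * J1)
            + (‖t‖ ^ (-(2*α)) * Cν) * ((Cν * K₀ * ‖t‖ ^ (-1:ℝ)) * J2)) := by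
          apply mul_le_mul_of_nonneg_left _ (norm_nonneg c)
          apply add_le_add
          · rw [norm_mul, norm_neg]
            exact mul_le_mul_of_nonneg_left (hg1bound t ht) (norm_nonneg t)
          · rw [norm_mul, norm_neg]
            apply mul_le_mul (hcpneg t ht) (hg2bound t ht) (norm_nonneg _)
            positivity
      _ = (‖c‖ * (K₀*J1 + Cν*Cν*K₀*J2)) * ‖t‖ ^ (-1-2*α) := by
          rw [e1, e2]; ring
  -- the derivative bound
  have hDbound : ∀ t ∈ S, ‖deriv Δ t‖ ≤
      (‖c‖ * (K₀*J1 + 2*‖ν‖*Cν*Cν*K₀*J2)) * ‖t‖ ^ (-2-2*α) := by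
    intro t ht
    have htp := htpos t ht
    obtain ⟨r, hr0, hrlt, hballS⟩ : ∃ r, 0 < r ∧ r < ‖t‖ ∧
        Metric.closedBall t r ⊆ S := by
      obtain ⟨r₀, hr₀, hb₀⟩ := Metric.isOpen_iff.mp hSopen t ht
      refine ⟨min (r₀/2) (‖t‖ / 2), by positivity, ?_, ?_⟩
      · exact lt_of_le_of_lt (min_le_right _ _) (by linarith)
      · refine (Metric.closedBall_subset_ball ?_).trans hb₀
        exact lt_of_le_of_lt (min_le_left _ _) (by linarith)
    set m : ℝ := ‖t‖ - r with hmdef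
    have hm : 0 < m := by rw [hmdef]; linarith
    set P : ℝ := ‖t‖ + r with hPdef
    have hP : 0 < P := by rw [hPdef]; linarith
    have hε : 0 < r/2 := by linarith
    have hrayball : ∀ σ:ℝ, 1 ≤ σ → ∀ u ∈ Metric.ball t (r/2),
        Metric.closedBall ((σ:ℂ)*u) (σ*(r/2)) ⊆ S := by
      intro σ hσ u hu w hw
      have hσ0 : (0:ℝ) < σ := lt_of_lt_of_le one_pos hσ
      have hσc : (σ:ℂ) ≠ 0 := by exact_mod_cast ne_of_gt hσ0
      have h1 : ‖w/(σ:ℂ) - u‖ ≤ r/2 := by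
        have he : w/(σ:ℂ) - u = (w - (σ:ℂ)*u)/(σ:ℂ) := by field_simp
        rw [he, norm_div, Complex.norm_real, Real.norm_eq_abs, _root_.abs_of_pos hσ0, div_le_iff₀ hσ0]
        calc ‖w - (σ:ℂ)*u‖ = dist w ((σ:ℂ)*u) := (Complex.dist_eq _ _).symm
          _ ≤ σ*(r/2) := Metric.mem_closedBall.mp hw
          _ = r/2*σ := by ring
      have h2 : w/(σ:ℂ) ∈ S := by
        apply hballS
        rw [Metric.mem_closedBall]
        calc dist (w/(σ:ℂ)) t ≤ dist (w/(σ:ℂ)) u + dist u t := dist_triangle _ _ _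
          _ ≤ r/2 + r/2 := add_le_add (by rw [Complex.dist_eq]; exact h1)
              (le_of_lt (Metric.mem_ball.mp hu))
          _ = r := by ring
      have h3 : w = (σ:ℂ) * (w/(σ:ℂ)) := by field_simp
      rw [h3]; exact hray _ h2 σ hσ
    have habs_u_lower : ∀ u ∈ Metric.ball t (r/2),
        ‖t‖ - r/2 ≤ ‖u‖ := by
      intro u hu
      have h2 : ‖t‖ - ‖u‖ ≤ ‖t - u‖ := by
        have := norm_sub_norm_le t u; simpa using this
      have h3 : ‖t - u‖ < r/2 := by
        rw [← Complex.dist_eq, dist_comm]; exact Metric.mem_ball.mp hu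
      linarith
    have habs_u_upper : ∀ u ∈ Metric.ball t (r/2), ‖u‖ ≤ P := by
      intro u hu
      have h2 : ‖u‖ - ‖t‖ ≤ ‖u - t‖ := by
        have := norm_sub_norm_le u t; simpa using this
      have h3 : ‖u - t‖ < r/2 := by
        rw [← Complex.dist_eq]; exact Metric.mem_ball.mp hu
      rw [hPdef]; linarith
    have hmemray : ∀ σ:ℝ, 1 ≤ σ → ∀ u ∈ Metric.ball t (r/2), (σ:ℂ)*u ∈ S := by
      intro σ hσ u hu
      have hσ0 : (0:ℝ) < σ := lt_of_lt_of_le one_pos hσ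
      exact hrayball σ hσ u hu (Metric.mem_closedBall_self (by positivity))
    have habsray_lower : ∀ σ:ℝ, 1 ≤ σ → ∀ u ∈ Metric.ball t (r/2),
        σ * m ≤ ‖(σ:ℂ)*u‖ := by
      intro σ hσ u hu
      have hσ0 : (0:ℝ) < σ := lt_of_lt_of_le one_pos hσ
      rw [habsmul u σ (le_of_lt hσ0)]
      have h4 := habs_u_lower u hu
      have : m ≤ ‖u‖ := by rw [hmdef]; linarith
      exact mul_le_mul_of_nonneg_left this (le_of_lt hσ0)
    have hRray : ∀ σ:ℝ, 1 ≤ σ → ∀ u ∈ Metric.ball t (r/2),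
        ‖R ((σ:ℂ)*u)‖ ≤ (K₀ * m^(-3-2*α)) * σ^(-3-2*α) := by
      intro σ hσ u hu
      have hσ0 : (0:ℝ) < σ := lt_of_lt_of_le one_pos hσ
      calc ‖R ((σ:ℂ)*u)‖ ≤ K₀ * ‖(σ:ℂ)*u‖ ^ (-3-2*α) :=
            hRb' _ (hmemray σ hσ u hu)
        _ ≤ K₀ * (σ*m)^(-3-2*α) := by
            apply mul_le_mul_of_nonneg_left _ hK₀0
            exact Real.rpow_le_rpow_of_nonpos (by positivity)
              (habsray_lower σ hσ u hu) (by linarith)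
        _ = (K₀ * m^(-3-2*α)) * σ^(-3-2*α) := by
            rw [Real.mul_rpow (le_of_lt hσ0) (le_of_lt hm)]; ring
    have hR'b : ∀ σ:ℝ, 1 ≤ σ → ∀ u ∈ Metric.ball t (r/2),
        ‖deriv R ((σ:ℂ)*u)‖ ≤ (K₀ * m^(-3-2*α) / (r/2)) * σ^(-4-2*α) := by
      intro σ hσ u hu
      have hσ0 : (0:ℝ) < σ := lt_of_lt_of_le one_pos hσ
      have hrad : 0 < σ * (r/2) := by positivity
      have hsub := hrayball σ hσ u hu
      have hd : DiffContOnCl ℂ R (Metric.ball ((σ:ℂ)*u) (σ*(r/2))) := by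
        apply DifferentiableOn.diffContOnCl
        apply hRa.mono
        rw [closure_ball _ (ne_of_gt hrad)]
        exact hsub
      have hC : ∀ z ∈ Metric.sphere ((σ:ℂ)*u) (σ*(r/2)), ‖R z‖ ≤ K₀ * (σ*m)^(-3-2*α) := by
        intro z hz
        have hzS : z ∈ S := hsub (Metric.sphere_subset_closedBall hz)
        have hzl : σ * m ≤ ‖z‖ := by
          have h1 : ‖(σ:ℂ)*u‖ - ‖(σ:ℂ)*u - z‖ ≤ ‖z‖ := by
            have h := norm_sub_norm_le ((σ:ℂ)*u) ((σ:ℂ)*u - z)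
            simpa using h
          have h2 : ‖(σ:ℂ)*u - z‖ = σ*(r/2) := by
            rw [← Complex.dist_eq, dist_comm]
            exact Metric.mem_sphere.mp hz
          have h3 := habsray_lower σ hσ u hu
          have h4 := habs_u_lower u hu
          have h5 : ‖(σ:ℂ)*u‖ = σ * ‖u‖ :=
            habsmul u σ (le_of_lt hσ0)
          rw [h5, h2] at h1
          nlinarith [mul_le_mul_of_nonneg_left h4 hσ0.le, hmdef]
        calc ‖R z‖ ≤ K₀ * ‖z‖ ^ (-3-2*α) := hRb' z hzS
          _ ≤ K₀ * (σ*m)^(-3-2*α) := by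
            apply mul_le_mul_of_nonneg_left _ hK₀0
            exact Real.rpow_le_rpow_of_nonpos (by positivity) hzl (by linarith)
      have key := Complex.norm_deriv_le_of_forall_mem_sphere_norm_le hrad hd hC
      calc ‖deriv R ((σ:ℂ)*u)‖ ≤ K₀*(σ*m)^(-3-2*α) / (σ*(r/2)) := key
        _ = (K₀ * m^(-3-2*α)/(r/2)) * (σ^(-3-2*α) * σ⁻¹) := by
            rw [Real.mul_rpow (le_of_lt hσ0) (le_of_lt hm)]
            field_simp
        _ = (K₀ * m^(-3-2*α)/(r/2)) * σ^(-4-2*α) := by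
            rw [← Real.rpow_neg_one σ, rpmul hσ0 (show (-3-2*α) + (-1) = -4-2*α by ring)]
    -- derivative of the first integrand in t
    have hdiff1 : ∀ σ:ℝ, 1 ≤ σ → ∀ u ∈ Metric.ball t (r/2),
        HasDerivAt (fun v => R ((σ:ℂ)*v) * v)
          (deriv R ((σ:ℂ)*u) * (σ:ℂ) * u + R ((σ:ℂ)*u)) u := by
      intro σ hσ u hu
      have huS := hmemray σ hσ u hu
      have hRd : HasDerivAt R (deriv R ((σ:ℂ)*u)) ((σ:ℂ)*u) :=
        (hRa.differentiableAt (hSopen.mem_nhds huS)).hasDerivAt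
      have hlin : HasDerivAt (fun v : ℂ => (σ:ℂ)*v) (σ:ℂ) u := by
        simpa using (hasDerivAt_id u).const_mul (σ:ℂ)
      have hcomp : HasDerivAt (fun v => R ((σ:ℂ)*v)) (deriv R ((σ:ℂ)*u) * (σ:ℂ)) u := by
        exact hRd.comp u hlin
      have := hcomp.mul (hasDerivAt_id u); rw [mul_one] at this; exact this
    have hq : 0 ≤ K₀ * m^(-3-2*α)/(r/2) := by positivity
    set C1 : ℝ := (K₀ * m^(-3-2*α)/(r/2)) * P + K₀ * m^(-3-2*α) with hC1def
    have hbF1 : ∀ σ:ℝ, 1 ≤ σ → ∀ u ∈ Metric.ball t (r/2),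
        ‖deriv R ((σ:ℂ)*u) * (σ:ℂ) * u + R ((σ:ℂ)*u)‖ ≤ C1 * σ^(-3-2*α) := by
      intro σ hσ u hu
      have hσ0 : (0:ℝ) < σ := lt_of_lt_of_le one_pos hσ
      have h1 : ‖deriv R ((σ:ℂ)*u) * (σ:ℂ) * u‖
          ≤ ((K₀ * m^(-3-2*α)/(r/2)) * P) * σ^(-3-2*α) := by
        rw [norm_mul, norm_mul, Complex.norm_real, Real.norm_eq_abs, _root_.abs_of_pos hσ0]
        calc ‖deriv R ((σ:ℂ)*u)‖ * σ * ‖u‖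
            ≤ ((K₀*m^(-3-2*α)/(r/2)) * σ^(-4-2*α)) * σ * P := by
              apply mul_le_mul _ (habs_u_upper u hu) (norm_nonneg u) (by positivity)
              exact mul_le_mul_of_nonneg_right (hR'b σ hσ u hu) hσ0.le
          _ = ((K₀*m^(-3-2*α)/(r/2)) * P) * (σ^(-4-2*α) * σ^(1:ℝ)) := by
              rw [Real.rpow_one]; ring
          _ = ((K₀*m^(-3-2*α)/(r/2)) * P) * σ^(-3-2*α) := by
              rw [rpmul hσ0 (show (-4-2*α)+1 = -3-2*α by ring)]
      have h2 := hRray σ hσ u hu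
      calc ‖deriv R ((σ:ℂ)*u) * (σ:ℂ) * u + R ((σ:ℂ)*u)‖
          ≤ ‖deriv R ((σ:ℂ)*u) * (σ:ℂ) * u‖ + ‖R ((σ:ℂ)*u)‖ := norm_add_le _ _
        _ ≤ ((K₀*m^(-3-2*α)/(r/2)) * P) * σ^(-3-2*α) + (K₀ * m^(-3-2*α)) * σ^(-3-2*α) := by
            exact add_le_add h1 h2
        _ = C1 * σ^(-3-2*α) := by rw [hC1def]; ring
    obtain ⟨hF1int, hg1d⟩ := hasDerivAt_integral_of_dominated_loc_of_deriv_le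
      (μ := volume.restrict (Set.Ici (1:ℝ)))
      (F := fun v (σ:ℝ) => R ((σ:ℂ)*v) * v)
      (F' := fun v (σ:ℝ) => deriv R ((σ:ℂ)*v) * (σ:ℂ) * v + R ((σ:ℂ)*v))
      (bound := fun σ => C1 * σ^(-3-2*α)) (Metric.ball_mem_nhds t hε)
      (by filter_upwards [hSopen.mem_nhds ht] with v hv; exact hmeas1 v hv)
      (hint1 t ht)
      (by
        apply ContinuousOn.aestronglyMeasurable _ measurableSet_Ici
        exact (((hR'cont.comp (hlinC t) (hmapS t ht)).mul
          (Complex.continuous_ofReal.continuousOn)).mul continuousOn_const).add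
          (hRcont.comp (hlinC t) (hmapS t ht)))
      (by
        filter_upwards [ae_restrict_mem measurableSet_Ici] with σ hσ
        intro v hv; exact hbF1 σ hσ v hv)
      ((vp_intOn hp1).const_mul C1)
      (by
        filter_upwards [ae_restrict_mem measurableSet_Ici] with σ hσ
        intro v hv; exact hdiff1 σ hσ v hv)
    -- FTC for the first integral
    have hFTC1 : (∫ σ in Set.Ici (1:ℝ), (deriv R ((σ:ℂ)*t) * (σ:ℂ) * t + R ((σ:ℂ)*t)))
        = -(R t) := by
      rw [MeasureTheory.integral_Ici_eq_integral_Ioi]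
      have hder : ∀ σ ∈ Set.Ici (1:ℝ), HasDerivAt (fun σ:ℝ => (σ:ℂ) * R ((σ:ℂ)*t))
          (deriv R ((σ:ℂ)*t) * (σ:ℂ) * t + R ((σ:ℂ)*t)) σ := by
        intro σ hσ
        have hσS : (σ:ℂ)*t ∈ S := hray t ht σ hσ
        have hRd : HasDerivAt R (deriv R ((σ:ℂ)*t)) ((σ:ℂ)*t) :=
          (hRa.differentiableAt (hSopen.mem_nhds hσS)).hasDerivAt
        have hlin : HasDerivAt (fun z : ℂ => z * t) t (σ:ℂ) := by
          simpa using (hasDerivAt_id ((σ:ℂ))).mul_const t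
        have hcomp : HasDerivAt (fun z : ℂ => R (z*t)) (deriv R ((σ:ℂ)*t) * t) (σ:ℂ) := by
          exact hRd.comp (σ:ℂ) hlin
        have hmul : HasDerivAt (fun z : ℂ => z * R (z*t))
            (1 * R ((σ:ℂ)*t) + (σ:ℂ) * (deriv R ((σ:ℂ)*t) * t)) (σ:ℂ) :=
          (hasDerivAt_id (σ:ℂ)).mul hcomp
        have h2 := hmul.comp_ofReal
        have h3 : 1 * R ((σ:ℂ)*t) + (σ:ℂ) * (deriv R ((σ:ℂ)*t) * t)
            = deriv R ((σ:ℂ)*t) * (σ:ℂ) * t + R ((σ:ℂ)*t) := by ring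
        rwa [h3] at h2
      have hF1int' : IntegrableOn (fun σ:ℝ => deriv R ((σ:ℂ)*t) * (σ:ℂ) * t + R ((σ:ℂ)*t))
          (Set.Ici 1) := hF1int
      have hintIoi : IntegrableOn (fun σ:ℝ => deriv R ((σ:ℂ)*t) * (σ:ℂ) * t + R ((σ:ℂ)*t))
          (Set.Ioi 1) := hF1int'.mono_set Set.Ioi_subset_Ici_self
      have htend : Tendsto (fun σ:ℝ => (σ:ℂ) * R ((σ:ℂ)*t)) atTop (𝓝 0) := by
        have hgb : ∀ᶠ σ:ℝ in atTop, ‖(σ:ℂ) * R ((σ:ℂ)*t)‖ ≤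
            (K₀ * ‖t‖ ^ (-3-2*α)) * σ^(-2-2*α) := by
          filter_upwards [Filter.eventually_ge_atTop (1:ℝ)] with σ hσ
          have hσ0 : (0:ℝ) < σ := lt_of_lt_of_le one_pos hσ
          have hmem := hray t ht σ hσ
          rw [norm_mul, Complex.norm_real, Real.norm_eq_abs,
            _root_.abs_of_pos hσ0]
          calc σ * ‖R ((σ:ℂ)*t)‖
              ≤ σ * (K₀ * ‖(σ:ℂ)*t‖ ^ (-3-2*α)) :=
                mul_le_mul_of_nonneg_left (hRb' _ hmem) hσ0.le
            _ = (K₀ * ‖t‖ ^ (-3-2*α)) * (σ^(1:ℝ) * σ^(-3-2*α)) := by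
                rw [habsmul t σ hσ0.le, Real.mul_rpow hσ0.le (norm_nonneg t),
                  Real.rpow_one]
                ring
            _ = (K₀ * ‖t‖ ^ (-3-2*α)) * σ^(-2-2*α) := by
                rw [rpmul hσ0 (show (1:ℝ) + (-3-2*α) = -2-2*α by ring)]
        have h0 : Tendsto (fun σ:ℝ => σ ^ (-(2+2*α))) atTop (𝓝 0) :=
          tendsto_rpow_neg_atTop (by linarith)
        have h1 : Tendsto (fun σ:ℝ => (K₀ * ‖t‖ ^ (-3-2*α)) * σ ^ (-2-2*α))
            atTop (𝓝 0) := by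
          have he : (fun σ:ℝ => (K₀ * ‖t‖ ^ (-3-2*α)) * σ ^ (-2-2*α))
              = (fun σ:ℝ => (K₀ * ‖t‖ ^ (-3-2*α)) * σ ^ (-(2+2*α))) := by
            funext σ; congr 1; ring_nf
          rw [he]
          simpa using h0.const_mul (K₀ * ‖t‖ ^ (-3-2*α))
        exact squeeze_zero_norm' hgb h1
      rw [MeasureTheory.integral_Ioi_of_hasDerivAt_of_tendsto'
        (fun σ hσ => hder σ hσ) hintIoi htend]
      simp
    -- cpow factor bounds along the ray
    have hreW : (1+2*ν).re = 1+2*α := by simp [hαdef]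
    have hreW' : (1+2*ν-1).re = 2*α := by simp [hαdef]
    have himW : |(1+2*ν).im| ≤ 2*|ν.im|+1 := by
      have h : (1 + 2*ν).im = 2 * ν.im := by simp
      rw [h, abs_mul]; rw [show |(2:ℝ)| = 2 by norm_num]
      linarith [abs_nonneg ν.im]
    have himW' : |(1+2*ν-1).im| ≤ 2*|ν.im|+1 := by
      have h : (1 + 2*ν - 1).im = 2 * ν.im := by simp
      rw [h, abs_mul]; rw [show |(2:ℝ)| = 2 by norm_num]
      linarith [abs_nonneg ν.im]
    have habsrayP : ∀ σ:ℝ, 1 ≤ σ → ∀ u ∈ Metric.ball t (r/2),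
        ‖(σ:ℂ)*u‖ ≤ σ * P := by
      intro σ hσ u hu
      have hσ0 : (0:ℝ) < σ := lt_of_lt_of_le one_pos hσ
      rw [habsmul u σ hσ0.le]
      exact mul_le_mul_of_nonneg_left (habs_u_upper u hu) hσ0.le
    have hcp1 : ∀ σ:ℝ, 1 ≤ σ → ∀ u ∈ Metric.ball t (r/2),
        ‖((σ:ℂ)*u) ^ (1+2*ν)‖ ≤ (Cν * P^(1+2*α)) * σ^(1+2*α) := by
      intro σ hσ u hu
      have hσ0 : (0:ℝ) < σ := lt_of_lt_of_le one_pos hσ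
      have hne : (σ:ℂ)*u ≠ 0 := htne _ (hmemray σ hσ u hu)
      have h := vp_cpow_bound hne himW
      rw [hreW] at h
      refine h.trans ?_
      calc ‖(σ:ℂ)*u‖ ^ (1+2*α) * Cν ≤ (σ*P)^(1+2*α) * Cν := by
            apply mul_le_mul_of_nonneg_right _ hCν0.le
            exact Real.rpow_le_rpow (norm_nonneg _) (habsrayP σ hσ u hu) (by linarith)
        _ = (Cν * P^(1+2*α)) * σ^(1+2*α) := by
            rw [Real.mul_rpow hσ0.le hP.le]; ring
    have hcp2 : ∀ σ:ℝ, 1 ≤ σ → ∀ u ∈ Metric.ball t (r/2),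
        ‖((σ:ℂ)*u) ^ (1+2*ν-1)‖ ≤ (Cν * P^(2*α)) * σ^(2*α) := by
      intro σ hσ u hu
      have hσ0 : (0:ℝ) < σ := lt_of_lt_of_le one_pos hσ
      have hne : (σ:ℂ)*u ≠ 0 := htne _ (hmemray σ hσ u hu)
      have h := vp_cpow_bound hne himW'
      rw [hreW'] at h
      refine h.trans ?_
      calc ‖(σ:ℂ)*u‖ ^ (2*α) * Cν ≤ (σ*P)^(2*α) * Cν := by
            apply mul_le_mul_of_nonneg_right _ hCν0.le
            exact Real.rpow_le_rpow (norm_nonneg _) (habsrayP σ hσ u hu) (by linarith)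
        _ = (Cν * P^(2*α)) * σ^(2*α) := by
            rw [Real.mul_rpow hσ0.le hP.le]; ring
    -- derivative of the second integrand in t
    have hdiff2 : ∀ σ:ℝ, 1 ≤ σ → ∀ u ∈ Metric.ball t (r/2),
        HasDerivAt (fun v => ((σ:ℂ)*v) ^ (1+2*ν) * R ((σ:ℂ)*v) * v)
          (((1+2*ν) * ((σ:ℂ)*u) ^ (1+2*ν-1) * (σ:ℂ) * R ((σ:ℂ)*u)
            + ((σ:ℂ)*u) ^ (1+2*ν) * (deriv R ((σ:ℂ)*u) * (σ:ℂ))) * u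
            + ((σ:ℂ)*u) ^ (1+2*ν) * R ((σ:ℂ)*u)) u := by
      intro σ hσ u hu
      have huS := hmemray σ hσ u hu
      have hRd : HasDerivAt R (deriv R ((σ:ℂ)*u)) ((σ:ℂ)*u) :=
        (hRa.differentiableAt (hSopen.mem_nhds huS)).hasDerivAt
      have hlin : HasDerivAt (fun v : ℂ => (σ:ℂ)*v) (σ:ℂ) u := by
        simpa using (hasDerivAt_id u).const_mul (σ:ℂ)
      have hcomp : HasDerivAt (fun v => R ((σ:ℂ)*v)) (deriv R ((σ:ℂ)*u) * (σ:ℂ)) u := by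
        exact hRd.comp u hlin
      have hcpw : HasDerivAt (fun v => ((σ:ℂ)*v) ^ (1+2*ν))
          ((1+2*ν) * ((σ:ℂ)*u) ^ (1+2*ν-1) * (σ:ℂ)) u := hlin.cpow_const (hslit huS)
      have hm1 := hcpw.mul hcomp
      have := hm1.mul (hasDerivAt_id u); rw [mul_one] at this; exact this
    -- bound for the second derivative integrand
    set N : ℝ := ‖1+2*ν‖ with hNdef
    set D1 : ℝ := N * (Cν * P^(2*α)) * (K₀*m^(-3-2*α)) with hD1def
    set D2 : ℝ := (Cν * P^(1+2*α)) * (K₀*m^(-3-2*α)/(r/2)) with hD2def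
    set D3 : ℝ := (Cν * P^(1+2*α)) * (K₀*m^(-3-2*α)) with hD3def
    set C2 : ℝ := (D1 + D2) * P + D3 with hC2def
    have hNn : 0 ≤ N := norm_nonneg _
    have hD1n : 0 ≤ D1 := mul_nonneg (mul_nonneg hNn
      (mul_nonneg hCν0.le (Real.rpow_nonneg hP.le _)))
      (mul_nonneg hK₀0 (Real.rpow_nonneg hm.le _))
    have hD2n : 0 ≤ D2 := mul_nonneg (mul_nonneg hCν0.le (Real.rpow_nonneg hP.le _))
      (div_nonneg (mul_nonneg hK₀0 (Real.rpow_nonneg hm.le _)) hε.le)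
    have hD3n : 0 ≤ D3 := mul_nonneg (mul_nonneg hCν0.le (Real.rpow_nonneg hP.le _))
      (mul_nonneg hK₀0 (Real.rpow_nonneg hm.le _))
    have hbF2 : ∀ σ:ℝ, 1 ≤ σ → ∀ u ∈ Metric.ball t (r/2),
        ‖((1+2*ν) * ((σ:ℂ)*u) ^ (1+2*ν-1) * (σ:ℂ) * R ((σ:ℂ)*u)
            + ((σ:ℂ)*u) ^ (1+2*ν) * (deriv R ((σ:ℂ)*u) * (σ:ℂ))) * u
            + ((σ:ℂ)*u) ^ (1+2*ν) * R ((σ:ℂ)*u)‖ ≤ C2 * σ^(-2:ℝ) := by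
      intro σ hσ u hu
      have hσ0 : (0:ℝ) < σ := lt_of_lt_of_le one_pos hσ
      have hX : ‖(1+2*ν) * ((σ:ℂ)*u) ^ (1+2*ν-1) * (σ:ℂ) * R ((σ:ℂ)*u)‖
          ≤ D1 * σ^(-2:ℝ) := by
        rw [norm_mul, norm_mul, norm_mul, Complex.norm_real, Real.norm_eq_abs, _root_.abs_of_pos hσ0]
        calc ‖1+2*ν‖ * ‖((σ:ℂ)*u) ^ (1+2*ν-1)‖ * σ
              * ‖R ((σ:ℂ)*u)‖
            ≤ N * ((Cν * P^(2*α)) * σ^(2*α)) * σ * ((K₀ * m^(-3-2*α)) * σ^(-3-2*α)) := by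
              apply mul_le_mul _ (hRray σ hσ u hu) (norm_nonneg _)
                (mul_nonneg (mul_nonneg hNn (mul_nonneg
                  (mul_nonneg hCν0.le (Real.rpow_nonneg hP.le _))
                  (Real.rpow_nonneg hσ0.le _))) hσ0.le)
              apply mul_le_mul_of_nonneg_right _ hσ0.le
              exact mul_le_mul_of_nonneg_left (hcp2 σ hσ u hu) (norm_nonneg _)
          _ = D1 * (σ^(2*α) * (σ^(1:ℝ) * σ^(-3-2*α))) := by
              rw [Real.rpow_one, hD1def]; ring
          _ = D1 * σ^(-2:ℝ) := by
              rw [rpmul hσ0 (show (1:ℝ) + (-3-2*α) = -2-2*α by ring),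
                rpmul hσ0 (show 2*α + (-2-2*α) = (-2:ℝ) by ring)]
      have hY : ‖((σ:ℂ)*u) ^ (1+2*ν) * (deriv R ((σ:ℂ)*u) * (σ:ℂ))‖
          ≤ D2 * σ^(-2:ℝ) := by
        rw [norm_mul, norm_mul, Complex.norm_real, Real.norm_eq_abs, _root_.abs_of_pos hσ0]
        calc ‖((σ:ℂ)*u) ^ (1+2*ν)‖ * (‖deriv R ((σ:ℂ)*u)‖ * σ)
            ≤ ((Cν * P^(1+2*α)) * σ^(1+2*α))
              * (((K₀*m^(-3-2*α)/(r/2)) * σ^(-4-2*α)) * σ) := by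
              apply mul_le_mul (hcp1 σ hσ u hu) _
                (mul_nonneg (norm_nonneg _) hσ0.le)
                (mul_nonneg (mul_nonneg hCν0.le (Real.rpow_nonneg hP.le _))
                  (Real.rpow_nonneg hσ0.le _))
              exact mul_le_mul_of_nonneg_right (hR'b σ hσ u hu) hσ0.le
          _ = D2 * (σ^(1+2*α) * (σ^(-4-2*α) * σ^(1:ℝ))) := by
              rw [Real.rpow_one, hD2def]; ring
          _ = D2 * σ^(-2:ℝ) := by
              rw [rpmul hσ0 (show (-4-2*α) + (1:ℝ) = -3-2*α by ring),
                rpmul hσ0 (show (1+2*α) + (-3-2*α) = (-2:ℝ) by ring)]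
      have hZ : ‖((σ:ℂ)*u) ^ (1+2*ν) * R ((σ:ℂ)*u)‖ ≤ D3 * σ^(-2:ℝ) := by
        rw [norm_mul]
        calc ‖((σ:ℂ)*u) ^ (1+2*ν)‖ * ‖R ((σ:ℂ)*u)‖
            ≤ ((Cν * P^(1+2*α)) * σ^(1+2*α)) * ((K₀ * m^(-3-2*α)) * σ^(-3-2*α)) :=
              mul_le_mul (hcp1 σ hσ u hu) (hRray σ hσ u hu) (norm_nonneg _)
                (mul_nonneg (mul_nonneg hCν0.le (Real.rpow_nonneg hP.le _))
                  (Real.rpow_nonneg hσ0.le _))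
          _ = D3 * (σ^(1+2*α) * σ^(-3-2*α)) := by rw [hD3def]; ring
          _ = D3 * σ^(-2:ℝ) := by
              rw [rpmul hσ0 (show (1+2*α) + (-3-2*α) = (-2:ℝ) by ring)]
      calc ‖((1+2*ν) * ((σ:ℂ)*u) ^ (1+2*ν-1) * (σ:ℂ) * R ((σ:ℂ)*u)
            + ((σ:ℂ)*u) ^ (1+2*ν) * (deriv R ((σ:ℂ)*u) * (σ:ℂ))) * u
            + ((σ:ℂ)*u) ^ (1+2*ν) * R ((σ:ℂ)*u)‖
          ≤ ‖((1+2*ν) * ((σ:ℂ)*u) ^ (1+2*ν-1) * (σ:ℂ) * R ((σ:ℂ)*u)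
            + ((σ:ℂ)*u) ^ (1+2*ν) * (deriv R ((σ:ℂ)*u) * (σ:ℂ))) * u‖
            + ‖((σ:ℂ)*u) ^ (1+2*ν) * R ((σ:ℂ)*u)‖ := norm_add_le _ _
        _ ≤ (‖(1+2*ν) * ((σ:ℂ)*u) ^ (1+2*ν-1) * (σ:ℂ) * R ((σ:ℂ)*u)‖
            + ‖((σ:ℂ)*u) ^ (1+2*ν) * (deriv R ((σ:ℂ)*u) * (σ:ℂ))‖)
              * ‖u‖ + ‖((σ:ℂ)*u) ^ (1+2*ν) * R ((σ:ℂ)*u)‖ := by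
            rw [norm_mul]
            apply add_le_add_left
            exact mul_le_mul_of_nonneg_right (norm_add_le _ _) (norm_nonneg u)
        _ ≤ (D1 * σ^(-2:ℝ) + D2 * σ^(-2:ℝ)) * P + D3 * σ^(-2:ℝ) := by
            apply add_le_add _ hZ
            apply mul_le_mul (add_le_add hX hY) (habs_u_upper u hu) (norm_nonneg u)
            exact add_nonneg (mul_nonneg hD1n (Real.rpow_nonneg hσ0.le _))
              (mul_nonneg hD2n (Real.rpow_nonneg hσ0.le _))
        _ = C2 * σ^(-2:ℝ) := by rw [hC2def]; ring
    obtain ⟨hF2int, hg2d⟩ := hasDerivAt_integral_of_dominated_loc_of_deriv_le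
      (μ := volume.restrict (Set.Ici (1:ℝ)))
      (F := fun v (σ:ℝ) => ((σ:ℂ)*v) ^ (1+2*ν) * R ((σ:ℂ)*v) * v)
      (F' := fun v (σ:ℝ) => ((1+2*ν) * ((σ:ℂ)*v) ^ (1+2*ν-1) * (σ:ℂ) * R ((σ:ℂ)*v)
            + ((σ:ℂ)*v) ^ (1+2*ν) * (deriv R ((σ:ℂ)*v) * (σ:ℂ))) * v
            + ((σ:ℂ)*v) ^ (1+2*ν) * R ((σ:ℂ)*v))
      (bound := fun σ => C2 * σ^(-2:ℝ)) (Metric.ball_mem_nhds t hε)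
      (by filter_upwards [hSopen.mem_nhds ht] with v hv; exact hmeas2 v hv)
      (hint2 t ht)
      (by
        apply ContinuousOn.aestronglyMeasurable _ measurableSet_Ici
        have hcpc2 : ContinuousOn (fun z : ℂ => z ^ (1 + 2*ν - 1)) S := fun z hz =>
          (continuousAt_cpow_const (hslit hz)).continuousWithinAt
        exact ((((continuousOn_const.mul (hcpc2.comp (hlinC t) (hmapS t ht))).mul
          (Complex.continuous_ofReal.continuousOn)).mul
          (hRcont.comp (hlinC t) (hmapS t ht))).add
          ((hcpowcont.comp (hlinC t) (hmapS t ht)).mul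
            ((hR'cont.comp (hlinC t) (hmapS t ht)).mul
              (Complex.continuous_ofReal.continuousOn)))).mul continuousOn_const |>.add
          ((hcpowcont.comp (hlinC t) (hmapS t ht)).mul
            (hRcont.comp (hlinC t) (hmapS t ht))))
      (by
        filter_upwards [ae_restrict_mem measurableSet_Ici] with σ hσ
        intro v hv; exact hbF2 σ hσ v hv)
      ((vp_intOn hp2).const_mul C2)
      (by
        filter_upwards [ae_restrict_mem measurableSet_Ici] with σ hσ
        intro v hv; exact hdiff2 σ hσ v hv)
    -- FTC for the second integral
    have hFTC2 : (∫ σ in Set.Ici (1:ℝ), (((1+2*ν) * ((σ:ℂ)*t) ^ (1+2*ν-1) * (σ:ℂ) * R ((σ:ℂ)*t)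
          + ((σ:ℂ)*t) ^ (1+2*ν) * (deriv R ((σ:ℂ)*t) * (σ:ℂ))) * t
          + ((σ:ℂ)*t) ^ (1+2*ν) * R ((σ:ℂ)*t)))
        = -(t ^ (1+2*ν) * R t) := by
      rw [MeasureTheory.integral_Ici_eq_integral_Ioi]
      have hder : ∀ σ ∈ Set.Ici (1:ℝ), HasDerivAt
          (fun σ:ℝ => (σ:ℂ) * (((σ:ℂ)*t) ^ (1+2*ν) * R ((σ:ℂ)*t)))
          (((1+2*ν) * ((σ:ℂ)*t) ^ (1+2*ν-1) * (σ:ℂ) * R ((σ:ℂ)*t)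
            + ((σ:ℂ)*t) ^ (1+2*ν) * (deriv R ((σ:ℂ)*t) * (σ:ℂ))) * t
            + ((σ:ℂ)*t) ^ (1+2*ν) * R ((σ:ℂ)*t)) σ := by
        intro σ hσ
        have hσS : (σ:ℂ)*t ∈ S := hray t ht σ hσ
        have hRd : HasDerivAt R (deriv R ((σ:ℂ)*t)) ((σ:ℂ)*t) :=
          (hRa.differentiableAt (hSopen.mem_nhds hσS)).hasDerivAt
        have hlin : HasDerivAt (fun z : ℂ => z * t) t (σ:ℂ) := by
          simpa using (hasDerivAt_id ((σ:ℂ))).mul_const t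
        have hcomp : HasDerivAt (fun z : ℂ => R (z*t)) (deriv R ((σ:ℂ)*t) * t) (σ:ℂ) := by
          exact hRd.comp (σ:ℂ) hlin
        have hcpw : HasDerivAt (fun z : ℂ => (z*t) ^ (1+2*ν))
            ((1+2*ν) * ((σ:ℂ)*t) ^ (1+2*ν-1) * t) (σ:ℂ) := hlin.cpow_const (hslit hσS)
        have hmul : HasDerivAt (fun z : ℂ => z * ((z*t) ^ (1+2*ν) * R (z*t)))
            (1 * (((σ:ℂ)*t) ^ (1+2*ν) * R ((σ:ℂ)*t)) + (σ:ℂ) *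
              (((1+2*ν) * ((σ:ℂ)*t) ^ (1+2*ν-1) * t) * R ((σ:ℂ)*t)
                + ((σ:ℂ)*t) ^ (1+2*ν) * (deriv R ((σ:ℂ)*t) * t))) (σ:ℂ) :=
          (hasDerivAt_id (σ:ℂ)).mul (hcpw.mul hcomp)
        have h2 := hmul.comp_ofReal
        have h3 : (1 * (((σ:ℂ)*t) ^ (1+2*ν) * R ((σ:ℂ)*t)) + (σ:ℂ) *
              (((1+2*ν) * ((σ:ℂ)*t) ^ (1+2*ν-1) * t) * R ((σ:ℂ)*t)
                + ((σ:ℂ)*t) ^ (1+2*ν) * (deriv R ((σ:ℂ)*t) * t)))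
            = ((1+2*ν) * ((σ:ℂ)*t) ^ (1+2*ν-1) * (σ:ℂ) * R ((σ:ℂ)*t)
              + ((σ:ℂ)*t) ^ (1+2*ν) * (deriv R ((σ:ℂ)*t) * (σ:ℂ))) * t
              + ((σ:ℂ)*t) ^ (1+2*ν) * R ((σ:ℂ)*t) := by ring
        rwa [h3] at h2
      have hF2int' : IntegrableOn (fun σ:ℝ =>
          ((1+2*ν) * ((σ:ℂ)*t) ^ (1+2*ν-1) * (σ:ℂ) * R ((σ:ℂ)*t)
            + ((σ:ℂ)*t) ^ (1+2*ν) * (deriv R ((σ:ℂ)*t) * (σ:ℂ))) * t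
            + ((σ:ℂ)*t) ^ (1+2*ν) * R ((σ:ℂ)*t)) (Set.Ici 1) := hF2int
      have hintIoi := hF2int'.mono_set Set.Ioi_subset_Ici_self
      have htend : Tendsto (fun σ:ℝ => (σ:ℂ) * (((σ:ℂ)*t) ^ (1+2*ν) * R ((σ:ℂ)*t)))
          atTop (𝓝 0) := by
        have hgb : ∀ᶠ σ:ℝ in atTop, ‖(σ:ℂ) * (((σ:ℂ)*t) ^ (1+2*ν) * R ((σ:ℂ)*t))‖ ≤
            (Cν * ‖t‖ ^ (1+2*α) * (K₀ * ‖t‖ ^ (-3-2*α))) * σ^(-1:ℝ) := by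
          filter_upwards [Filter.eventually_ge_atTop (1:ℝ)] with σ hσ
          have hσ0 : (0:ℝ) < σ := lt_of_lt_of_le one_pos hσ
          have hmem := hray t ht σ hσ
          have hne : (σ:ℂ)*t ≠ 0 := htne _ hmem
          have hcpb := vp_cpow_bound hne himW
          rw [hreW] at hcpb
          rw [norm_mul, norm_mul, Complex.norm_real, Real.norm_eq_abs, _root_.abs_of_pos hσ0]
          calc σ * (‖((σ:ℂ)*t) ^ (1+2*ν)‖ * ‖R ((σ:ℂ)*t)‖)
              ≤ σ * ((‖(σ:ℂ)*t‖ ^ (1+2*α) * Cν)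
                  * (K₀ * ‖(σ:ℂ)*t‖ ^ (-3-2*α))) := by
                apply mul_le_mul_of_nonneg_left _ hσ0.le
                exact mul_le_mul hcpb (hRb' _ hmem) (norm_nonneg _)
                  (mul_nonneg (Real.rpow_nonneg (norm_nonneg _) _) hCν0.le)
            _ = (Cν * ‖t‖ ^ (1+2*α) * (K₀ * ‖t‖ ^ (-3-2*α)))
                  * (σ^(1:ℝ) * (σ^(1+2*α) * σ^(-3-2*α))) := by
                rw [habsmul t σ hσ0.le, Real.mul_rpow hσ0.le (norm_nonneg t),
                  Real.mul_rpow hσ0.le (norm_nonneg t), Real.rpow_one]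
                ring
            _ = (Cν * ‖t‖ ^ (1+2*α) * (K₀ * ‖t‖ ^ (-3-2*α)))
                  * σ^(-1:ℝ) := by
                rw [rpmul hσ0 (show (1+2*α)+(-3-2*α) = (-2:ℝ) by ring),
                  rpmul hσ0 (show (1:ℝ)+(-2) = (-1:ℝ) by ring)]
        have h0 : Tendsto (fun σ:ℝ => σ ^ (-1:ℝ)) atTop (𝓝 0) := by
          simpa using tendsto_rpow_neg_atTop (show (0:ℝ) < 1 by norm_num)
        have h1 : Tendsto (fun σ:ℝ =>
            (Cν * ‖t‖ ^ (1+2*α) * (K₀ * ‖t‖ ^ (-3-2*α)))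
              * σ ^ (-1:ℝ)) atTop (𝓝 0) := by
          simpa using h0.const_mul
            (Cν * ‖t‖ ^ (1+2*α) * (K₀ * ‖t‖ ^ (-3-2*α)))
        exact squeeze_zero_norm' hgb h1
      rw [MeasureTheory.integral_Ioi_of_hasDerivAt_of_tendsto'
        (fun σ hσ => hder σ hσ) hintIoi htend]
      norm_num
    -- assemble the derivative of Δ at t
    have h1 : HasDerivAt (fun v => ∫ σ in Set.Ici (1:ℝ), R ((σ:ℂ)*v) * v) (-(R t)) t := by
      rw [← hFTC1]; exact hg1d
    have h2 : HasDerivAt (fun v => ∫ σ in Set.Ici (1:ℝ),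
        ((σ:ℂ)*v) ^ (1+2*ν) * R ((σ:ℂ)*v) * v) (-(t ^ (1+2*ν) * R t)) t := by
      rw [← hFTC2]; exact hg2d
    have hEv : Δ =ᶠ[𝓝 t] (fun v => c * (v * (-(∫ σ in Set.Ici (1:ℝ), R ((σ:ℂ)*v) * v))
        - v ^ (-2*ν) * (-(∫ σ in Set.Ici (1:ℝ), ((σ:ℂ)*v) ^ (1+2*ν) * R ((σ:ℂ)*v) * v)))) := by
      filter_upwards [hSopen.mem_nhds ht] with v hv
      exact hΔ v hv
    have hA : HasDerivAt (fun v : ℂ => v * (-(∫ σ in Set.Ici (1:ℝ), R ((σ:ℂ)*v) * v)))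
        (1 * (-(∫ σ in Set.Ici (1:ℝ), R ((σ:ℂ)*t) * t)) + t * (R t)) t := by
      have := (hasDerivAt_id t).mul h1.neg
      simp only [neg_neg] at this; exact this
    have hBcp : HasDerivAt (fun v : ℂ => v ^ (-2*ν)) ((-2*ν) * t ^ (-2*ν-1) * 1) t :=
      (hasDerivAt_id t).cpow_const (hslit ht)
    have hB : HasDerivAt (fun v : ℂ => v ^ (-2*ν) * (-(∫ σ in Set.Ici (1:ℝ),
            ((σ:ℂ)*v) ^ (1+2*ν) * R ((σ:ℂ)*v) * v)))
        (((-2*ν) * t ^ (-2*ν-1) * 1) * (-(∫ σ in Set.Ici (1:ℝ),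
            ((σ:ℂ)*t) ^ (1+2*ν) * R ((σ:ℂ)*t) * t))
          + t ^ (-2*ν) * (t ^ (1+2*ν) * R t)) t := by
      have := hBcp.mul h2.neg
      simp only [neg_neg] at this; exact this
    have hder : HasDerivAt Δ (c * ((1 * (-(∫ σ in Set.Ici (1:ℝ), R ((σ:ℂ)*t) * t)) + t * (R t))
        - (((-2*ν) * t ^ (-2*ν-1) * 1) * (-(∫ σ in Set.Ici (1:ℝ),
            ((σ:ℂ)*t) ^ (1+2*ν) * R ((σ:ℂ)*t) * t))
          + t ^ (-2*ν) * (t ^ (1+2*ν) * R t)))) t :=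
      ((hA.sub hB).const_mul c).congr_of_eventuallyEq hEv
    rw [hder.deriv]
    have hpow : t ^ (-2*ν) * t ^ (1+2*ν) = t := by
      rw [← Complex.cpow_add _ _ (htne t ht), show -2*ν + (1+2*ν) = 1 by ring,
        Complex.cpow_one]
    have hsimp : c * ((1 * (-(∫ σ in Set.Ici (1:ℝ), R ((σ:ℂ)*t) * t)) + t * (R t))
        - (((-2*ν) * t ^ (-2*ν-1) * 1) * (-(∫ σ in Set.Ici (1:ℝ),
            ((σ:ℂ)*t) ^ (1+2*ν) * R ((σ:ℂ)*t) * t))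
          + t ^ (-2*ν) * (t ^ (1+2*ν) * R t)))
        = c * (-(∫ σ in Set.Ici (1:ℝ), R ((σ:ℂ)*t) * t)
            - (2*ν) * (t ^ (-2*ν-1) * (∫ σ in Set.Ici (1:ℝ),
              ((σ:ℂ)*t) ^ (1+2*ν) * R ((σ:ℂ)*t) * t))) := by
      linear_combination (-(c * R t)) * hpow
    rw [hsimp]
    have hcpm1 : ‖t ^ (-2*ν-1)‖ ≤ ‖t‖ ^ (-(2*α)-1) * Cν := by
      have him : |(-2*ν-1).im| ≤ 2*|ν.im|+1 := by
        have h : (-2*ν-1).im = -(2*ν.im) := by simp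
        rw [h, abs_neg, abs_mul]; rw [show |(2:ℝ)| = 2 by norm_num]
        linarith [abs_nonneg ν.im]
      have h := vp_cpow_bound (htne t ht) him
      have hre2 : (-2*ν-1).re = -(2*α)-1 := by simp [hαdef]
      rwa [hre2] at h
    calc ‖c * (-(∫ σ in Set.Ici (1:ℝ), R ((σ:ℂ)*t) * t)
            - (2*ν) * (t ^ (-2*ν-1) * (∫ σ in Set.Ici (1:ℝ),
              ((σ:ℂ)*t) ^ (1+2*ν) * R ((σ:ℂ)*t) * t)))‖
        = ‖c‖ * ‖-(∫ σ in Set.Ici (1:ℝ), R ((σ:ℂ)*t) * t)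
            - (2*ν) * (t ^ (-2*ν-1) * (∫ σ in Set.Ici (1:ℝ),
              ((σ:ℂ)*t) ^ (1+2*ν) * R ((σ:ℂ)*t) * t))‖ := norm_mul _ _
      _ ≤ ‖c‖ * (‖∫ σ in Set.Ici (1:ℝ), R ((σ:ℂ)*t) * t‖
            + (2 * ‖ν‖) * (‖t ^ (-2*ν-1)‖
              * ‖∫ σ in Set.Ici (1:ℝ),
                ((σ:ℂ)*t) ^ (1+2*ν) * R ((σ:ℂ)*t) * t‖)) := by
          apply mul_le_mul_of_nonneg_left _ (norm_nonneg c)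
          refine (norm_sub_le _ _).trans ?_
          rw [norm_neg, norm_mul, norm_mul, norm_mul, Complex.norm_two]
      _ ≤ ‖c‖ * ((K₀ * ‖t‖ ^ (-2-2*α)) * J1
            + (2 * ‖ν‖) * ((‖t‖ ^ (-(2*α)-1) * Cν)
              * ((Cν * K₀ * ‖t‖ ^ (-1:ℝ)) * J2))) := by
          apply mul_le_mul_of_nonneg_left _ (norm_nonneg c)
          apply add_le_add (hg1bound t ht)
          apply mul_le_mul_of_nonneg_left _
            (mul_nonneg (by norm_num) (norm_nonneg ν))
          exact mul_le_mul hcpm1 (hg2bound t ht) (norm_nonneg _)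
            (mul_nonneg (Real.rpow_nonneg (norm_nonneg t) _) hCν0.le)
      _ = (‖c‖ * (K₀*J1 + 2*‖ν‖*Cν*Cν*K₀*J2))
            * ‖t‖ ^ (-2-2*α) := by
          have e1 : ‖t‖ ^ (-(2*α)-1) * ‖t‖ ^ (-1:ℝ)
              = ‖t‖ ^ (-2-2*α) := rpmul htp (by ring)
          rw [show (K₀ * ‖t‖ ^ (-2-2*α)) * J1
              + (2 * ‖ν‖) * ((‖t‖ ^ (-(2*α)-1) * Cν)
                * ((Cν * K₀ * ‖t‖ ^ (-1:ℝ)) * J2))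
              = K₀*J1*‖t‖ ^ (-2-2*α) + (2*‖ν‖*Cν*Cν*K₀*J2)
                * (‖t‖ ^ (-(2*α)-1) * ‖t‖ ^ (-1:ℝ)) by ring, e1]
          ring
  -- conclusion
  refine ⟨max (‖c‖ * (K₀*J1 + Cν*Cν*K₀*J2))
      (‖c‖ * (K₀*J1 + 2*‖ν‖*Cν*Cν*K₀*J2)) + 1, ?_, ?_⟩
  · have h1 : 0 ≤ ‖c‖ * (K₀*J1 + Cν*Cν*K₀*J2) :=
      mul_nonneg (norm_nonneg c) (add_nonneg (mul_nonneg hK₀0 hJ1)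
        (mul_nonneg (mul_nonneg (mul_nonneg hCν0.le hCν0.le) hK₀0) hJ2))
    have h2 := le_max_left (‖c‖ * (K₀*J1 + Cν*Cν*K₀*J2))
      (‖c‖ * (K₀*J1 + 2*‖ν‖*Cν*Cν*K₀*J2))
    linarith
  · intro t ht
    have h2 := le_max_left (‖c‖ * (K₀*J1 + Cν*Cν*K₀*J2))
      (‖c‖ * (K₀*J1 + 2*‖ν‖*Cν*Cν*K₀*J2))
    have h3 := le_max_right (‖c‖ * (K₀*J1 + Cν*Cν*K₀*J2))
      (‖c‖ * (K₀*J1 + 2*‖ν‖*Cν*Cν*K₀*J2))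
    constructor
    · refine (hΔbound t ht).trans ?_
      apply mul_le_mul_of_nonneg_right _ (Real.rpow_nonneg (norm_nonneg t) _)
      linarith
    · refine (hDbound t ht).trans ?_
      apply mul_le_mul_of_nonneg_right _ (Real.rpow_nonneg (norm_nonneg t) _)
      linarith
end

section
/- Suppose T₀, T₁, T₂ : D → ℂ with |T₀ T₂ / T₁²| ≤ 1/8 on D, T₁ ≠ 0. Then τ := 4 (T₀/T₁)² (T₂/T₁) (1 + √(1 − 4T₀T₂/T₁²))^{-2} satisfies |τ| ≤ 4 |T₀|² |T₂| / |T₁|³, and moreover (−T₁ + √(T₁² − 4T₀T₂))/(2T₂) = −T₀/T₁ − τ. -/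
open Complex

lemma re_cpow_half_nonneg (z : ℂ) (hz : 0 ≤ z.re) : 0 ≤ (z ^ ((1:ℂ)/2)).re := by
  rcases eq_or_ne z 0 with h | h
  · simp [h, Complex.zero_cpow (by norm_num : (1:ℂ)/2 ≠ 0)]
  · rw [Complex.cpow_def_of_ne_zero h, Complex.exp_re]
    apply mul_nonneg (Real.exp_pos _).le
    apply Real.cos_nonneg_of_mem_Icc
    have harg : |Complex.arg z| ≤ Real.pi / 2 :=
      Complex.abs_arg_le_pi_div_two_iff.mpr hz
    have him : (Complex.log z * ((1:ℂ)/2)).im = Complex.arg z / 2 := by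
      simp [Complex.mul_im, Complex.log_im]
      ring
    rw [him]
    have := abs_le.mp harg
    constructor <;> nlinarith [Real.pi_pos]

/-- If `|T₀T₂/T₁²| ≤ 1/8` and `T₁, T₂ ≠ 0` on `D`, then
`τ := 4(T₀/T₁)²(T₂/T₁)(1 + √(1 − 4T₀T₂/T₁²))⁻²` satisfies
`|τ| ≤ 4|T₀|²|T₂|/|T₁|³`, and
`(−T₁ + √(T₁² − 4T₀T₂))/(2T₂) = −T₀/T₁ − τ`, where
`√(T₁² − 4T₀T₂)` is chosen as `T₁√(1 − 4T₀T₂/T₁²)` (principal branch). -/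
theorem tau_bound_and_identity (D : Set ℂ) (T₀ T₁ T₂ : ℂ → ℂ)
    (h1 : ∀ t ∈ D, T₁ t ≠ 0) (h2 : ∀ t ∈ D, T₂ t ≠ 0)
    (h3 : ∀ t ∈ D, ‖T₀ t * T₂ t / (T₁ t) ^ 2‖ ≤ 1 / 8) :
    ∀ t ∈ D,
      ‖4 * (T₀ t / T₁ t) ^ 2 * (T₂ t / T₁ t) *
          (1 + (1 - 4 * T₀ t * T₂ t / (T₁ t) ^ 2) ^ ((1 : ℂ) / 2))⁻¹ ^ 2‖
        ≤ 4 * (‖T₀ t‖) ^ 2 * ‖T₂ t‖ / (‖T₁ t‖) ^ 3 ∧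
      (-T₁ t + T₁ t * (1 - 4 * T₀ t * T₂ t / (T₁ t) ^ 2) ^ ((1 : ℂ) / 2)) / (2 * T₂ t)
        = -(T₀ t / T₁ t)
          - 4 * (T₀ t / T₁ t) ^ 2 * (T₂ t / T₁ t) *
            (1 + (1 - 4 * T₀ t * T₂ t / (T₁ t) ^ 2) ^ ((1 : ℂ) / 2))⁻¹ ^ 2 := by
  intro t ht
  have hb := h1 t ht
  have hc := h2 t ht
  have h8 := h3 t ht
  set a := T₀ t with ha
  set b := T₁ t with hbb
  set c := T₂ t with hcc
  set z : ℂ := 4 * a * c / b ^ 2 with hzdef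
  have hzabs : ‖z‖ ≤ 1 / 2 := by
    have : z = 4 * (a * c / b ^ 2) := by rw [hzdef]; ring
    rw [this, norm_mul]
    simp only [Complex.norm_ofNat]
    linarith
  have hre : (1 / 2 : ℝ) ≤ (1 - z).re := by
    have h1 : z.re ≤ ‖z‖ := Complex.re_le_norm z
    simp only [Complex.sub_re, Complex.one_re]
    linarith
  have h1zne : (1 : ℂ) - z ≠ 0 := by
    intro h
    rw [h] at hre
    simp at hre
    linarith
  set w : ℂ := (1 - z) ^ ((1:ℂ)/2) with hwdef
  have hw2 : w ^ 2 = 1 - z := by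
    rw [hwdef, sq, ← Complex.cpow_add _ _ h1zne]
    norm_num
  have hrew : 0 ≤ w.re := re_cpow_half_nonneg _ (by linarith)
  have habs : 1 ≤ ‖1 + w‖ := by
    have hsq : (‖1 + w‖) ^ 2 = (1 + w.re) ^ 2 + w.im ^ 2 := by
      rw [Complex.sq_norm, Complex.normSq_apply]
      simp [Complex.add_re, Complex.add_im]
      ring
    nlinarith [norm_nonneg (1 + w), sq_nonneg w.im]
  have hne : (1 : ℂ) + w ≠ 0 := by
    intro h
    rw [h] at habs
    simp at habs
    linarith
  constructor
  · have heq : ‖4 * (a / b) ^ 2 * (c / b) * (1 + w)⁻¹ ^ 2‖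
        = 4 * (‖a‖) ^ 2 * ‖c‖ / (‖b‖) ^ 3
          / (‖1 + w‖) ^ 2 := by
      simp only [norm_mul, norm_pow, norm_div, norm_inv, Complex.norm_ofNat]
      field_simp
    rw [heq]
    apply div_le_self
    · positivity
    · nlinarith
  · have key : b ^ 2 * w ^ 2 = b ^ 2 - 4 * a * c := by
      rw [hw2, hzdef]
      field_simp
    set u : ℂ := 1 + w with hudef
    have key2 : b ^ 2 * (u - 1) ^ 2 = b ^ 2 - 4 * a * c := by
      rw [hudef]
      linear_combination key
    rw [show w = u - 1 by rw [hudef]; ring]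
    field_simp [hb, hc, hne]
    linear_combination (b ^ 3 * w + b ^ 3 + 2 * a * b * c + (1 - b) * (2 * a * c + b ^ 2 + b ^ 2 * w)) * key
end
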